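/- arXiv:1711.08578 — 2 statements merged into one kernel-verified Lean document; each statement's English description precedes it below -/
import Mathlib

section
/- Let W = 8·∏_{2 < p ≤ w} p be eight times the product of all odd primes up to some bound w ≥ 3. For any integer N ≡ 5 (mod 24), there exist integers b₁, ..., b₅ with 1 ≤ bᵢ ≤ W, gcd(bᵢ, W) = 1, each bᵢ a quadratic residue modulo W (i.e., there exists x coprime to W with x² ≡ bᵢ (mod W)), such that N ≡ b₁ + b₂ + b₃ + b₄ + b₅ (mod W). -/
open Finset Pointwise in
lemma five_nonzero_squares {p : ℕ} [hp : Fact p.Prime] (hp5 : 5 ≤ p) (c : ZMod p) :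
    ∃ t : Fin 5 → ZMod p, (∀ i, t i ≠ 0) ∧ (∑ i, (t i) ^ 2) = c := by
  have hprime := hp.out
  set S : Finset (ZMod p) :=
    (univ.filter (fun x : ZMod p => x ≠ 0)).image (fun x => x ^ 2) with hS
  have hSne : S.Nonempty := ⟨1, by
    simp only [hS, mem_image, mem_filter, mem_univ, true_and]
    exact ⟨1, one_ne_zero, one_pow 2⟩⟩
  have hcard : p - 1 ≤ 2 * S.card := by
    have h2 : ∀ b ∈ (univ.filter (fun x : ZMod p => x ≠ 0)).image (fun x => x ^ 2),
        ((univ.filter (fun x : ZMod p => x ≠ 0)).filter (fun x => x ^ 2 = b)).card ≤ 2 := by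
      intro b hb
      obtain ⟨a, -, ha⟩ := mem_image.mp hb
      have hsub : (univ.filter (fun x : ZMod p => x ≠ 0)).filter (fun x => x ^ 2 = b)
          ⊆ {a, -a} := by
        intro x hx
        simp only [mem_filter, mem_univ, true_and] at hx
        have : x ^ 2 - a ^ 2 = 0 := by rw [hx.2, ha]; ring
        have : (x - a) * (x + a) = 0 := by ring_nf; linear_combination this
        rcases mul_eq_zero.mp this with h | h
        · simp [sub_eq_zero.mp h]
        · simp [eq_neg_of_add_eq_zero_left h]
      calc _ ≤ ({a, -a} : Finset (ZMod p)).card := card_le_card hsub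
        _ ≤ 2 := (card_insert_le _ _).trans (by simp)
    have hle2 := Finset.card_le_mul_card_image (univ.filter (fun x : ZMod p => x ≠ 0)) 2 h2
    rw [← hS] at hle2
    have hc : (univ.filter (fun x : ZMod p => x ≠ 0)).card = p - 1 := by
      rw [filter_ne']
      rw [card_erase_of_mem (mem_univ _), card_univ, ZMod.card]
    omega
  have cd : ∀ A B : Finset (ZMod p), A.Nonempty → B.Nonempty →
      min p (A.card + B.card - 1) ≤ (A + B).card := fun A B hA hB =>
    ZMod.cauchy_davenport hprime hA hB
  have h2 := cd S S hSne hSne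
  have h2ne : (S + S).Nonempty := hSne.add hSne
  have h3 := cd (S + S) S h2ne hSne
  have h3ne := h2ne.add hSne
  have h4 := cd (S + S + S) S h3ne hSne
  have h4ne := h3ne.add hSne
  have h5 := cd (S + S + S + S) S h4ne hSne
  have hle : (S + S + S + S + S).card ≤ p := by
    simpa [ZMod.card] using card_le_univ (S + S + S + S + S)
  have huniv : (S + S + S + S + S) = univ := by
    apply Finset.eq_univ_of_card
    simp only [card_univ, ZMod.card]
    omega
  have hc : c ∈ S + S + S + S + S := huniv ▸ mem_univ c
  rw [Finset.mem_add] at hc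
  obtain ⟨d, hd, e5, he5, hde⟩ := hc
  rw [Finset.mem_add] at hd
  obtain ⟨d2, hd2, e4, he4, hd2e⟩ := hd
  rw [Finset.mem_add] at hd2
  obtain ⟨d3, hd3, e3, he3, hd3e⟩ := hd2
  rw [Finset.mem_add] at hd3
  obtain ⟨e1, he1, e2, he2, hd4e⟩ := hd3
  have getx : ∀ y ∈ S, ∃ x : ZMod p, x ≠ 0 ∧ x ^ 2 = y := by
    intro y hy
    obtain ⟨x, hx, hxy⟩ := mem_image.mp hy
    exact ⟨x, (mem_filter.mp hx).2, hxy⟩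
  obtain ⟨x1, hx1, hx1y⟩ := getx _ he1
  obtain ⟨x2, hx2, hx2y⟩ := getx _ he2
  obtain ⟨x3, hx3, hx3y⟩ := getx _ he3
  obtain ⟨x4, hx4, hx4y⟩ := getx _ he4
  obtain ⟨x5, hx5, hx5y⟩ := getx _ he5
  refine ⟨![x1, x2, x3, x4, x5], ?_, ?_⟩
  · intro i; fin_cases i <;> assumption
  · simp [Fin.sum_univ_five, hx1y, hx2y, hx3y, hx4y, hx5y, ← hde, ← hd2e, ← hd3e, ← hd4e]

lemma crt_step (M p : ℕ) (hp : p.Prime) (hp5 : 5 ≤ p) (hcop : Nat.Coprime p M)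
    (N : ℤ) (u : Fin 5 → ℤ) (hu : ∀ i, IsCoprime (u i) (M : ℤ))
    (hNu : N ≡ ∑ i, (u i) ^ 2 [ZMOD (M : ℤ)]) :
    ∃ v : Fin 5 → ℤ, (∀ i, IsCoprime (v i) ((M * p : ℕ) : ℤ)) ∧
      N ≡ ∑ i, (v i) ^ 2 [ZMOD ((M * p : ℕ) : ℤ)] := by
  haveI : Fact p.Prime := ⟨hp⟩
  obtain ⟨t, ht0, htsum⟩ := five_nonzero_squares hp5 ((N : ZMod p))
  have hpM : IsCoprime (p : ℤ) (M : ℤ) := by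
    rw [Int.isCoprime_iff_gcd_eq_one]; exact_mod_cast hcop
  obtain ⟨a, b, hab⟩ := hpM
  set v : Fin 5 → ℤ := fun i => u i * (a * p) + ((t i).val : ℤ) * (b * M) with hv
  have hvMdvd : ∀ i, ∃ k : ℤ, v i = u i + (M : ℤ) * k := by
    intro i
    exact ⟨b * (((t i).val : ℤ) - u i), by linear_combination (u i) * hab⟩
  have hvpdvd : ∀ i, ∃ k : ℤ, v i = ((t i).val : ℤ) + (p : ℤ) * k := by
    intro i
    exact ⟨a * (u i - ((t i).val : ℤ)), by linear_combination (((t i).val : ℤ)) * hab⟩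
  have hvM : ∀ i, v i ≡ u i [ZMOD (M : ℤ)] := by
    intro i
    obtain ⟨k, hk⟩ := hvMdvd i
    exact Int.modEq_iff_dvd.mpr ⟨-k, by linear_combination -hk⟩
  have hvp : ∀ i, v i ≡ ((t i).val : ℤ) [ZMOD (p : ℤ)] := by
    intro i
    obtain ⟨k, hk⟩ := hvpdvd i
    exact Int.modEq_iff_dvd.mpr ⟨-k, by linear_combination -hk⟩
  have htcop : ∀ i, IsCoprime (((t i).val : ℤ)) (p : ℤ) := by
    intro i
    rw [Int.isCoprime_iff_gcd_eq_one, Int.gcd_natCast_natCast]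
    refine (Nat.coprime_comm.mp (hp.coprime_iff_not_dvd.mpr ?_))
    intro hdvd
    have h0 : (t i).val = 0 := Nat.eq_zero_of_dvd_of_lt hdvd (t i).val_lt
    exact ht0 i ((ZMod.val_eq_zero _).mp h0)
  have hvcop : ∀ i, IsCoprime (v i) ((M * p : ℕ) : ℤ) := by
    intro i
    push_cast
    apply IsCoprime.mul_right
    · obtain ⟨k, hk⟩ := hvMdvd i
      rw [hk]
      exact (hu i).add_mul_left_left k
    · obtain ⟨k, hk⟩ := hvpdvd i
      rw [hk]
      exact (htcop i).add_mul_left_left k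
  have hsum : N ≡ ∑ i, (v i) ^ 2 [ZMOD ((M * p : ℕ) : ℤ)] := by
    push_cast
    rw [← Int.modEq_and_modEq_iff_modEq_mul (by simpa using hcop.symm)]
    constructor
    · refine hNu.trans ?_
      simp only [Fin.sum_univ_five]
      exact Int.ModEq.add (Int.ModEq.add (Int.ModEq.add (Int.ModEq.add
        ((hvM 0).symm.pow 2) ((hvM 1).symm.pow 2)) ((hvM 2).symm.pow 2))
        ((hvM 3).symm.pow 2)) ((hvM 4).symm.pow 2)
    · have hNp : N ≡ ∑ i, (((t i).val : ℤ)) ^ 2 [ZMOD (p : ℤ)] := by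
        rw [← ZMod.intCast_eq_intCast_iff]
        push_cast
        rw [← htsum]
        congr 1
        funext i
        rw [ZMod.natCast_val (t i) (R := ZMod p), ZMod.cast_id]
      refine hNp.trans ?_
      simp only [Fin.sum_univ_five]
      exact Int.ModEq.add (Int.ModEq.add (Int.ModEq.add (Int.ModEq.add
        ((hvp 0).symm.pow 2) ((hvp 1).symm.pow 2)) ((hvp 2).symm.pow 2))
        ((hvp 3).symm.pow 2)) ((hvp 4).symm.pow 2)
  exact ⟨v, hvcop, hsum⟩

lemma qr_main (w : ℕ) (hw : 3 ≤ w) (N : ℤ) (hN : N ≡ 5 [ZMOD 24]) :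
    ∃ u : Fin 5 → ℤ,
      (∀ i, IsCoprime (u i)
        ((8 * ∏ p ∈ (Finset.range (w + 1)).filter (fun p => p.Prime ∧ Odd p), p : ℕ) : ℤ)) ∧
      N ≡ ∑ i, (u i) ^ 2
        [ZMOD ((8 * ∏ p ∈ (Finset.range (w + 1)).filter (fun p => p.Prime ∧ Odd p), p : ℕ) : ℤ)] := by
  induction w with
  | zero => omega
  | succ n ih =>
    rcases Nat.lt_or_ge n 3 with h3 | h3
    · have hn : n = 2 := by omega
      subst hn
      have hset : (Finset.range 4).filter (fun p => p.Prime ∧ Odd p) = {3} := by decide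
      rw [hset]
      refine ⟨fun _ => 1, fun i => isCoprime_one_left, ?_⟩
      have : ((8 * ∏ p ∈ ({3} : Finset ℕ), p : ℕ) : ℤ) = 24 := by norm_num
      rw [this]
      simpa [Fin.sum_univ_five] using hN
    · have ihn := ih h3
      by_cases hp : (n + 1).Prime ∧ Odd (n + 1)
      · have hnot : (n + 1) ∉ (Finset.range (n + 1)).filter (fun p => p.Prime ∧ Odd p) := by
          simp
        have hset : (Finset.range (n + 2)).filter (fun p => p.Prime ∧ Odd p)
            = insert (n + 1) ((Finset.range (n + 1)).filter (fun p => p.Prime ∧ Odd p)) := by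
          rw [Finset.range_add_one, Finset.filter_insert, if_pos hp]
        obtain ⟨u, hu, hNu⟩ := ihn
        set M : ℕ := 8 * ∏ p ∈ (Finset.range (n + 1)).filter (fun p => p.Prime ∧ Odd p), p
          with hM
        have hre : 8 * ∏ p ∈ (Finset.range (n + 2)).filter (fun p => p.Prime ∧ Odd p), p
            = M * (n + 1) := by
          rw [hset, Finset.prod_insert hnot, hM]; ring
        rw [hre]
        have h5 : 5 ≤ n + 1 := by
          rcases Nat.lt_or_ge (n + 1) 5 with h | h
          · exfalso
            have : n + 1 = 4 := by omega
            rw [this] at hp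
            exact absurd hp.1 (by decide)
          · exact h
        have hcop : Nat.Coprime (n + 1) M := by
          apply Nat.Coprime.mul_right
          · refine hp.1.coprime_iff_not_dvd.mpr ?_
            intro hdvd
            have h8 : n + 1 ≤ 8 := Nat.le_of_dvd (by norm_num) hdvd
            have hodd := hp.2
            rw [Nat.odd_iff] at hodd
            have hub : n ≤ 7 := by omega
            have hlb : 4 ≤ n := by omega
            interval_cases n <;> omega
          · refine hp.1.coprime_iff_not_dvd.mpr ?_
            intro hdvd
            obtain ⟨q, hq, hdq⟩ := (hp.1.prime.dvd_finset_prod_iff _).mp hdvd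
            simp only [Finset.mem_filter, Finset.mem_range] at hq
            have hq2 : 2 ≤ q := hq.2.1.two_le
            have := Nat.le_of_dvd (by omega) hdq
            omega
        exact crt_step M (n + 1) hp.1 h5 hcop N u hu hNu
      · have hset : (Finset.range (n + 2)).filter (fun p => p.Prime ∧ Odd p)
            = (Finset.range (n + 1)).filter (fun p => p.Prime ∧ Odd p) := by
          rw [Finset.range_add_one, Finset.filter_insert, if_neg hp]
        rw [hset]
        exact ihn

theorem five_qr_decomposition_mod_W (w : ℕ) (hw : 3 ≤ w)
    (W : ℕ)
    (hW : W = 8 * ∏ p ∈ (Finset.range (w + 1)).filter (fun p => p.Prime ∧ Odd p), p)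
    (N : ℤ) (hN : N ≡ 5 [ZMOD 24]) :
    ∃ b : Fin 5 → ℕ,
      (∀ i, 1 ≤ b i ∧ b i ≤ W ∧ Nat.gcd (b i) W = 1 ∧
        ∃ x : ℕ, Nat.gcd x W = 1 ∧ x ^ 2 ≡ b i [MOD W]) ∧
      N ≡ (↑(b 0 + b 1 + b 2 + b 3 + b 4)) [ZMOD W] := by
  obtain ⟨u, hu, hNu⟩ := qr_main w hw N hN
  rw [← hW] at hu hNu
  have hprodpos : 0 < ∏ p ∈ (Finset.range (w + 1)).filter (fun p => p.Prime ∧ Odd p), p :=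
    Finset.prod_pos (fun p hp => (Finset.mem_filter.mp hp).2.1.pos)
  have hWpos : 0 < W := by rw [hW]; positivity
  have hW1 : 1 < W := by omega
  set x : Fin 5 → ℕ := fun i => (u i % (W : ℤ)).toNat with hxdef
  have hxval : ∀ i, ((x i : ℤ)) = u i % (W : ℤ) := by
    intro i
    exact Int.toNat_of_nonneg (Int.emod_nonneg _ (by exact_mod_cast hWpos.ne'))
  have hxu : ∀ i, (x i : ℤ) ≡ u i [ZMOD (W : ℤ)] := by
    intro i
    rw [hxval i]
    exact Int.emod_emod_of_dvd _ dvd_rfl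
  have hxcop : ∀ i, Nat.gcd (x i) W = 1 := by
    intro i
    have h1 : IsCoprime ((x i : ℤ)) (W : ℤ) := by
      rw [hxval i, Int.emod_def, sub_eq_add_neg, ← mul_neg]
      exact (hu i).add_mul_left_left _
    have := Int.isCoprime_iff_gcd_eq_one.mp h1
    rwa [Int.gcd_natCast_natCast] at this
  set b : Fin 5 → ℕ := fun i => (x i) ^ 2 % W with hbdef
  have hbcop : ∀ i, Nat.gcd (b i) W = 1 := by
    intro i
    have : Nat.gcd W ((x i) ^ 2) = 1 := by
      rw [Nat.gcd_comm]
      exact Nat.Coprime.pow_left 2 (hxcop i)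
    rw [hbdef]
    simpa [← Nat.gcd_rec] using this
  have hb1 : ∀ i, 1 ≤ b i := by
    intro i
    rcases Nat.eq_zero_or_pos (b i) with h | h
    · exfalso
      have := hbcop i
      rw [h, Nat.gcd_zero_left] at this
      omega
    · exact h
  have hbW : ∀ i, b i ≤ W := fun i => (Nat.mod_lt _ hWpos).le
  have hbx : ∀ i, (b i : ℤ) ≡ (x i : ℤ) ^ 2 [ZMOD (W : ℤ)] := by
    intro i
    have : ((b i : ℕ) : ℤ) = ((x i : ℤ)) ^ 2 % (W : ℤ) := by
      rw [hbdef]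
      push_cast
      ring_nf
    rw [this]
    exact Int.emod_emod_of_dvd _ dvd_rfl
  refine ⟨b, fun i => ⟨hb1 i, hbW i, hbcop i, x i, hxcop i, ?_⟩, ?_⟩
  · show (x i) ^ 2 % W = b i % W
    simp [hbdef, Nat.mod_mod_of_dvd]
  · have hchain : N ≡ (b 0 : ℤ) + b 1 + b 2 + b 3 + b 4 [ZMOD (W : ℤ)] := by
      refine hNu.trans ?_
      have step1 : (∑ i, (u i) ^ 2) ≡ (b 0 : ℤ) + b 1 + b 2 + b 3 + b 4 [ZMOD (W : ℤ)] := by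
        simp only [Fin.sum_univ_five]
        have h : ∀ i, (u i) ^ 2 ≡ (b i : ℤ) [ZMOD (W : ℤ)] := fun i =>
          ((hbx i).trans ((hxu i).pow 2)).symm
        exact Int.ModEq.add (Int.ModEq.add (Int.ModEq.add (Int.ModEq.add
          (h 0) (h 1)) (h 2)) (h 3)) (h 4)
      exact step1
    have : ((b 0 + b 1 + b 2 + b 3 + b 4 : ℕ) : ℤ) = (b 0 : ℤ) + b 1 + b 2 + b 3 + b 4 := by
      push_cast; ring
    rw [this]
    exact hchain
end

section
/- Let a, b, v be positive integers with gcd(a,b) = 1, v | b, and b/v odd. Then there exists S ∈ {−1, 1}, depending only on a, b, v, such that for every positive integer c with gcd(c², b) = v, the Jacobi symbol satisfies (a·(c²/v) / (b/v)) = S. -/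
-- key coprimality: if gcd(c^2, b) = v then c^2/v is coprime to b/v
lemma aux_coprime (b v c : ℕ) (hv : 0 < v) (hvb : v ∣ b)
    (hg : Nat.gcd (c ^ 2) b = v) : Nat.Coprime (c ^ 2 / v) (b / v) := by
  have hvc : v ∣ c ^ 2 := hg ▸ Nat.gcd_dvd_left _ _
  set d := Nat.gcd (c ^ 2 / v) (b / v) with hd
  have h1 : d * v ∣ c ^ 2 := by
    obtain ⟨k, hk⟩ := (Nat.gcd_dvd_left (c ^ 2 / v) (b / v))
    exact ⟨k, by rw [mul_comm d v, mul_assoc, ← hk, Nat.mul_div_cancel' hvc]⟩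
  have h2 : d * v ∣ b := by
    obtain ⟨k, hk⟩ := (Nat.gcd_dvd_right (c ^ 2 / v) (b / v))
    exact ⟨k, by rw [mul_comm d v, mul_assoc, ← hk, Nat.mul_div_cancel' hvb]⟩
  have h3 : d * v ∣ v := by have h := Nat.dvd_gcd h1 h2; rwa [hg] at h
  have hdv : d * v = v := Nat.dvd_antisymm h3 (dvd_mul_left v d)
  have : d = 1 := Nat.eq_of_mul_eq_mul_right hv (by rw [hdv, one_mul])
  exact this

theorem jacobi_indep_of_c (a b v : ℕ) (ha : 0 < a) (hb : 0 < b) (hv : 0 < v)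
    (hab : Nat.Coprime a b) (hvb : v ∣ b) (hodd : Odd (b / v)) :
    ∃ S : ℤ, (S = 1 ∨ S = -1) ∧
      ∀ c : ℕ, 0 < c → Nat.gcd (c ^ 2) b = v →
        jacobiSym (a * (c ^ 2 / v)) (b / v) = S := by
  set n := b / v with hn
  by_cases hex : ∃ c : ℕ, 0 < c ∧ Nat.gcd (c ^ 2) b = v
  · obtain ⟨c₀, hc₀, hg₀⟩ := hex
    have han : Nat.Coprime a n := hab.coprime_dvd_right (Nat.div_dvd_of_dvd hvb)
    have hcop₀ := aux_coprime b v c₀ hv hvb hg₀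
    refine ⟨jacobiSym (a * (c₀ ^ 2 / v)) n, ?_, ?_⟩
    · apply jacobiSym.eq_one_or_neg_one
      have : Nat.Coprime (a * (c₀ ^ 2 / v)) n := han.mul hcop₀
      have h : Int.gcd ((a * (c₀ ^ 2 / v) : ℕ) : ℤ) n = 1 := by
        rw [Int.gcd_natCast_natCast]; exact this
      simpa using h
    · intro c hc hg
      have hcop := aux_coprime b v c hv hvb hg
      -- reduce to equality of J(c^2/v | n) and J(c₀^2/v | n)
      have key : jacobiSym ((c ^ 2 / v : ℕ)) n = jacobiSym ((c₀ ^ 2 / v : ℕ)) n := by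
        have hvc : v ∣ c ^ 2 := hg ▸ Nat.gcd_dvd_left _ _
        have hvc₀ : v ∣ c₀ ^ 2 := hg₀ ▸ Nat.gcd_dvd_left _ _
        have hvcc : v ∣ c * c₀ := by
          rw [← Nat.pow_dvd_pow_iff (two_ne_zero), mul_pow]
          calc v ^ 2 = v * v := sq v
            _ ∣ c ^ 2 * c₀ ^ 2 := mul_dvd_mul hvc hvc₀
        have hprod : (c ^ 2 / v) * (c₀ ^ 2 / v) = (c * c₀ / v) ^ 2 := by
          rw [Nat.div_mul_div_comm hvc hvc₀, Nat.div_pow hvcc, mul_pow, ← pow_two]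
        have hcopcc : Nat.Coprime (c * c₀ / v) n := by
          have : Nat.Coprime ((c * c₀ / v) ^ 2) n := by
            rw [← hprod]; exact hcop.mul hcop₀
          exact (Nat.coprime_pow_left_iff (by norm_num : 0 < 2) _ _).mp this
        have hmul : jacobiSym ((c ^ 2 / v : ℕ)) n * jacobiSym ((c₀ ^ 2 / v : ℕ)) n = 1 := by
          rw [← jacobiSym.mul_left]
          rw [show ((c ^ 2 / v : ℕ) : ℤ) * ((c₀ ^ 2 / v : ℕ) : ℤ) = ((c * c₀ / v : ℕ) : ℤ) ^ 2 by
            rw [← Nat.cast_mul, ← Nat.cast_pow, hprod]]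
          apply jacobiSym.sq_one'
          rw [Int.gcd_natCast_natCast]; exact hcopcc
        have h1 := jacobiSym.eq_one_or_neg_one (a := ((c ^ 2 / v : ℕ) : ℤ)) (b := n)
          (by rw [Int.gcd_natCast_natCast]; exact hcop)
        have h0 := jacobiSym.eq_one_or_neg_one (a := ((c₀ ^ 2 / v : ℕ) : ℤ)) (b := n)
          (by rw [Int.gcd_natCast_natCast]; exact hcop₀)
        rcases h1 with h1 | h1 <;> rcases h0 with h0 | h0 <;> rw [h1, h0] at hmul ⊢ <;> norm_num at hmul
      calc jacobiSym (a * (c ^ 2 / v)) n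
          = jacobiSym a n * jacobiSym ((c ^ 2 / v : ℕ)) n := by
            rw [← jacobiSym.mul_left]; norm_num
        _ = jacobiSym a n * jacobiSym ((c₀ ^ 2 / v : ℕ)) n := by rw [key]
        _ = jacobiSym (a * (c₀ ^ 2 / v)) n := by rw [← jacobiSym.mul_left]; norm_num
  · exact ⟨1, Or.inl rfl, fun c hc hg => absurd ⟨c, hc, hg⟩ hex⟩
end
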